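/- arXiv:2111.06008 — 4 statements merged into one kernel-verified Lean document; each statement's English description precedes it below -/
import Mathlib

section
/- (Markov chain tree theorem) Let Q be the transition matrix of an n-state ergodic Markov chain with all entries strictly positive. For each j define Σ_j = Σ_{T ∈ 𝒯_j} Π_{(a,b) ∈ E(T)} Q[a,b], where 𝒯_j is the set of directed trees on {1,...,n} rooted at j, and let Σ = Σ_1 + ... + Σ_n. Then the vector π with π[j] = Σ_j/Σ is a stationary distribution of Q, i.e., π^T Q = π^T. -/
open scoped Classical

/-- A directed tree on `Fin n` rooted at `j`, encoded by the "parent" function `f`. -/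
def IsRootedTree {n : ℕ} (j : Fin n) (f : Fin n → Fin n) : Prop :=
  f j = j ∧ ∀ v : Fin n, ∃ k : ℕ, f^[k] v = j

section aux
variable {α : Type*} [DecidableEq α]

lemma reach_update (g : α → α) (j a : α) :
    ∀ s v, g^[s] v = j → ∃ m, (Function.update g j a)^[m] v = j := by
  intro s
  induction s with
  | zero => intro v h; exact ⟨0, h⟩
  | succ s ih =>
    intro v h
    by_cases hv : v = j
    · exact ⟨0, hv⟩
    · obtain ⟨m, hm⟩ := ih (g v) (by simpa [Function.iterate_succ_apply] using h)
      exact ⟨m + 1, by simpa [Function.iterate_succ_apply, Function.update_of_ne hv] using hm⟩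

noncomputable def treePred (g : α → α) (k : α) : α :=
  if h : ∃ m, g^[m+1] k = k then g^[Nat.find h] k else k

lemma treePred_apply (g : α → α) (k : α) (h : ∃ m, g^[m+1] k = k) :
    g (treePred g k) = k := by
  rw [treePred, dif_pos h]
  have := Nat.find_spec h
  rwa [Function.iterate_succ_apply'] at this

lemma treePred_update (f : α → α) (j k : α) (hfj : f j = j) (hreach : ∃ s, f^[s] k = j) :
    treePred (Function.update f j k) k = j := by
  set g := Function.update f j k with hg
  set t := Nat.find hreach with ht
  have htspec : f^[t] k = j := Nat.find_spec hreach
  have hiter : ∀ i, i ≤ t → g^[i] k = f^[i] k := by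
    intro i hi
    induction i with
    | zero => rfl
    | succ i ih =>
      have hlt : i < t := Nat.lt_of_succ_le hi
      have hne : f^[i] k ≠ j := fun hcon => absurd hcon (Nat.find_min hreach hlt)
      rw [Function.iterate_succ_apply', Function.iterate_succ_apply',
        ih (Nat.le_of_lt hlt), hg, Function.update_of_ne hne]
  have hcyc : g^[t+1] k = k := by
    rw [Function.iterate_succ_apply', hiter t le_rfl, htspec, hg, Function.update_self]
  have h : ∃ m, g^[m+1] k = k := ⟨t, hcyc⟩
  have hmin : ∀ i, i < t → ¬ g^[i+1] k = k := by
    intro i hi hcon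
    rw [hiter (i+1) hi] at hcon
    have : f^[t - (i+1)] k = j := by
      have : f^[(t - (i+1)) + (i+1)] k = j := by
        rwa [Nat.sub_add_cancel hi] 
      rwa [Function.iterate_add_apply, hcon] at this
    exact absurd this (Nat.find_min hreach (by omega))
  have hfind : Nat.find h = t := by
    apply le_antisymm
    · exact Nat.find_le hcyc
    · by_contra hlt
      push_neg at hlt
      exact hmin _ hlt (Nat.find_spec h)
  rw [treePred, dif_pos h, hfind, hiter t le_rfl, htspec]

end aux

lemma treePred_orbit {α : Type*} [DecidableEq α] (g : α → α) (k : α) (h : ∃ m, g^[m+1] k = k) :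
    ∃ t, g^[t] k = treePred g k := ⟨Nat.find h, by rw [treePred, dif_pos h]⟩

def Good {n : ℕ} (k : Fin n) (g : Fin n → Fin n) : Prop := ∀ v, ∃ m, g^[m] (g v) = k

lemma good_reach {n : ℕ} {k : Fin n} {g : Fin n → Fin n} (hg : Good k g) :
    ∀ v, ∃ s, g^[s] v = k := by
  intro v
  obtain ⟨m, hm⟩ := hg v
  exact ⟨m + 1, by rwa [Function.iterate_succ_apply]⟩

lemma prod_update {n : ℕ} (Q : Matrix (Fin n) (Fin n) ℝ) (f : Fin n → Fin n) (j b : Fin n) :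
    (∏ v ∈ Finset.univ.filter (fun v => v ≠ j), Q v (f v)) * Q j b
      = ∏ v, Q v (Function.update f j b v) := by
  rw [Finset.prod_eq_mul_prod_sdiff_singleton_of_mem (Finset.mem_univ j)
    (fun v => Q v (Function.update f j b v)), Function.update_self, mul_comm]
  congr 1
  rw [show Finset.univ.filter (fun v => v ≠ j) = Finset.univ \ {j} by
    rw [Finset.filter_ne', Finset.erase_eq]]
  refine Finset.prod_congr rfl fun v hv => ?_
  rw [Function.update_of_ne (fun h => (Finset.mem_sdiff.mp hv).2 (Finset.mem_singleton.mpr h))]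

lemma sumA {n : ℕ} (Q : Matrix (Fin n) (Fin n) ℝ) (k : Fin n) :
    (∑ j, (∑ f : Fin n → Fin n,
        if IsRootedTree j f then ∏ v ∈ Finset.univ.filter (fun v => v ≠ j), Q v (f v) else 0)
        * Q j k)
      = ∑ g ∈ Finset.univ.filter (Good k), ∏ v, Q v (g v) := by
  have step1 : (∑ j, (∑ f : Fin n → Fin n,
        if IsRootedTree j f then ∏ v ∈ Finset.univ.filter (fun v => v ≠ j), Q v (f v) else 0)
        * Q j k)
      = ∑ p ∈ (Finset.univ : Finset (Fin n × (Fin n → Fin n))).filter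
          (fun p => IsRootedTree p.1 p.2),
        (∏ v ∈ Finset.univ.filter (fun v => v ≠ p.1), Q v (p.2 v)) * Q p.1 k := by
    rw [Finset.sum_filter, ← Finset.univ_product_univ, Finset.sum_product]
    refine Finset.sum_congr rfl fun j _ => ?_
    rw [Finset.sum_mul]
    refine Finset.sum_congr rfl fun f _ => ?_
    rw [ite_mul, zero_mul]
  rw [step1]
  refine Finset.sum_nbij' (fun p => Function.update p.2 p.1 k)
    (fun g => (treePred g k, Function.update g (treePred g k) (treePred g k)))
    ?_ ?_ ?_ ?_ ?_
  · -- forward map lands in Good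
    rintro ⟨j, f⟩ hp
    obtain ⟨hfj, hreach⟩ := (Finset.mem_filter.mp hp).2
    simp only [Finset.mem_filter, Finset.mem_univ, true_and]
    intro v
    obtain ⟨s, hs⟩ := hreach v
    obtain ⟨m, hm⟩ := reach_update f j k s v hs
    refine ⟨m, ?_⟩
    have : (Function.update f j k)^[m+1] v = k := by
      rw [Function.iterate_succ_apply', hm, Function.update_self]
    rwa [Function.iterate_succ_apply] at this
  · -- backward map lands in trees
    intro g hg
    have hgood : Good k g := (Finset.mem_filter.mp hg).2
    have hk : ∃ m, g^[m+1] k = k := by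
      obtain ⟨m, hm⟩ := hgood k
      exact ⟨m, by rwa [Function.iterate_succ_apply]⟩
    set j := treePred g k with hj
    simp only [Finset.mem_filter, Finset.mem_univ, true_and]
    refine ⟨Function.update_self _ _ _, fun v => ?_⟩
    obtain ⟨s, hs⟩ := good_reach hgood v
    obtain ⟨t, ht⟩ := treePred_orbit g k hk
    have : g^[t + s] v = j := by rw [Function.iterate_add_apply, hs, ht]
    exact reach_update g j j (t + s) v this
  · -- left inverse
    rintro ⟨j, f⟩ hp
    obtain ⟨hfj, hreach⟩ := (Finset.mem_filter.mp hp).2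
    have hfj' : f j = j := hfj
    have hpred : treePred (Function.update f j k) k = j :=
      treePred_update f j k hfj' (hreach k)
    refine Prod.ext hpred ?_
    show Function.update (Function.update f j k) (treePred (Function.update f j k) k)
        (treePred (Function.update f j k) k) = f
    rw [hpred, Function.update_idem,
      show Function.update f j j = Function.update f j (f j) by rw [hfj'],
      Function.update_eq_self]
  · -- right inverse
    intro g hg
    have hgood : Good k g := (Finset.mem_filter.mp hg).2
    have hk : ∃ m, g^[m+1] k = k := by
      obtain ⟨m, hm⟩ := hgood k
      exact ⟨m, by rwa [Function.iterate_succ_apply]⟩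
    have hgj : g (treePred g k) = k := treePred_apply g k hk
    show Function.update (Function.update g (treePred g k) (treePred g k)) (treePred g k) k = g
    rw [Function.update_idem]
    have h2 := Function.update_eq_self (treePred g k) g
    rwa [hgj] at h2
  · -- weights agree
    rintro ⟨j, f⟩ _
    exact prod_update Q f j k

lemma sumB {n : ℕ} (Q : Matrix (Fin n) (Fin n) ℝ) (hrow : ∀ a, ∑ b, Q a b = 1) (k : Fin n) :
    (∑ f : Fin n → Fin n,
        if IsRootedTree k f then ∏ v ∈ Finset.univ.filter (fun v => v ≠ k), Q v (f v) else 0)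
      = ∑ g ∈ Finset.univ.filter (Good k), ∏ v, Q v (g v) := by
  have step1 : (∑ f : Fin n → Fin n,
        if IsRootedTree k f then ∏ v ∈ Finset.univ.filter (fun v => v ≠ k), Q v (f v) else 0)
      = ∑ p ∈ (Finset.univ : Finset ((Fin n → Fin n) × Fin n)).filter
          (fun p => IsRootedTree k p.1),
        (∏ v ∈ Finset.univ.filter (fun v => v ≠ k), Q v (p.1 v)) * Q k p.2 := by
    rw [Finset.sum_filter, ← Finset.univ_product_univ, Finset.sum_product]
    refine Finset.sum_congr rfl fun f _ => ?_
    by_cases h : IsRootedTree k f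
    · simp only [h, if_true]
      rw [← Finset.mul_sum, hrow k, mul_one]
    · simp [h]
  rw [step1]
  refine Finset.sum_nbij' (fun p => Function.update p.1 k p.2)
    (fun g => (Function.update g k k, g k)) ?_ ?_ ?_ ?_ ?_
  · rintro ⟨f, b⟩ hp
    obtain ⟨hfk, hreach⟩ := (Finset.mem_filter.mp hp).2
    simp only [Finset.mem_filter, Finset.mem_univ, true_and]
    have hR : ∀ v, ∃ m, (Function.update f k b)^[m] v = k := by
      intro v
      obtain ⟨s, hs⟩ := hreach v
      exact reach_update f k b s v hs
    intro v
    exact hR (Function.update f k b v)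
  · intro g hg
    have hgood : Good k g := (Finset.mem_filter.mp hg).2
    simp only [Finset.mem_filter, Finset.mem_univ, true_and]
    refine ⟨Function.update_self _ _ _, fun v => ?_⟩
    obtain ⟨s, hs⟩ := good_reach hgood v
    exact reach_update g k k s v hs
  · rintro ⟨f, b⟩ hp
    have hfk' : f k = k := (Finset.mem_filter.mp hp).2.1
    refine Prod.ext ?_ ?_
    · show Function.update (Function.update f k b) k k = f
      rw [Function.update_idem,
        show Function.update f k k = Function.update f k (f k) by rw [hfk'],
        Function.update_eq_self]
    · exact Function.update_self _ _ _
  · intro g hg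
    show Function.update (Function.update g k k) k (g k) = g
    rw [Function.update_idem, Function.update_eq_self]
  · rintro ⟨f, b⟩ _
    exact prod_update Q f k b


/-- **Markov chain tree theorem.** For an `n`-state Markov chain with row-stochastic
transition matrix `Q` having strictly positive entries, the vector
`π j = Σ_j / Σ`, where `Σ_j` is the sum over directed trees rooted at `j` of the
product of `Q`-entries along the tree's edges and `Σ = Σ_1 + ⋯ + Σ_n`, is a
stationary distribution of `Q`: `πᵀ Q = πᵀ`. -/
theorem markov_chain_tree_theorem (n : ℕ) (hn : 1 ≤ n)
    (Q : Matrix (Fin n) (Fin n) ℝ)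
    (hpos : ∀ a b, 0 < Q a b) (hrow : ∀ a, ∑ b, Q a b = 1) :
    let Sig : Fin n → ℝ := fun j =>
      ∑ f : Fin n → Fin n,
        if IsRootedTree j f then ∏ v ∈ Finset.univ.filter (fun v => v ≠ j), Q v (f v) else 0
    let π : Fin n → ℝ := fun j => Sig j / ∑ j', Sig j'
    (∀ j, 0 ≤ π j) ∧ (∑ j, π j = 1) ∧ (∀ k, ∑ j, π j * Q j k = π k) := by
  
  intro Sig π
  have hSig : ∀ j, Sig j = ∑ f : Fin n → Fin n,
      if IsRootedTree j f then ∏ v ∈ Finset.univ.filter (fun v => v ≠ j), Q v (f v) else 0 :=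
    fun j => rfl
  have hπ : ∀ j, π j = Sig j / ∑ j', Sig j' := fun j => rfl
  have hSigpos : ∀ j, 0 < Sig j := by
    intro j
    rw [hSig]
    apply Finset.sum_pos'
    · intro f _
      split
      · exact Finset.prod_nonneg fun v _ => (hpos v (f v)).le
      · exact le_refl 0
    · refine ⟨fun _ => j, Finset.mem_univ _, ?_⟩
      rw [if_pos ⟨rfl, fun v => ⟨1, rfl⟩⟩]
      exact Finset.prod_pos fun v _ => hpos v j
  have : Nonempty (Fin n) := ⟨⟨0, hn⟩⟩
  have hS : 0 < ∑ j', Sig j' := Finset.sum_pos (fun j _ => hSigpos j) Finset.univ_nonempty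
  have hkey : ∀ k, ∑ j, Sig j * Q j k = Sig k := by
    intro k
    simp only [hSig]
    rw [sumA Q k, ← sumB Q hrow k]
  refine ⟨fun j => div_nonneg (hSigpos j).le hS.le, ?_, fun k => ?_⟩
  · simp only [hπ]
    rw [← Finset.sum_div, div_self hS.ne']
  · simp only [hπ]
    rw [Finset.sum_congr rfl fun j _ => div_mul_eq_mul_div (Sig j) (∑ j', Sig j') (Q j k),
      ← Finset.sum_div, hkey k]
end

section
/- If q, q' ∈ Δ^n have strictly positive entries and are ζ-multiplicatively close, i.e., max{‖q/q'‖_∞, ‖q'/q‖_∞} ≤ 1 + ζ, then for any z ∈ R^n: (1 - ζ) Var_q(z) ≤ Var_{q'}(z) ≤ (1 + ζ) Var_q(z). -/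
/-- The variance of `z` under the distribution `q`. -/
noncomputable def varD {n : ℕ} (q z : Fin n → ℝ) : ℝ :=
  ∑ j, q j * (z j - ∑ k, q k * z k) ^ 2

lemma varD_nonneg {n : ℕ} (q z : Fin n → ℝ) (hq : ∀ j, 0 ≤ q j) : 0 ≤ varD q z :=
  Finset.sum_nonneg fun j _ => mul_nonneg (hq j) (sq_nonneg _)

lemma varD_min {n : ℕ} (q z : Fin n → ℝ) (hqs : ∑ j, q j = 1) (c : ℝ) :
    varD q z ≤ ∑ j, q j * (z j - c) ^ 2 := by
  set μ := ∑ k, q k * z k with hμ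
  have key : ∑ j, q j * (z j - c) ^ 2 = varD q z + (μ - c) ^ 2 := by
    unfold varD
    have h : ∀ j, q j * (z j - c) ^ 2 =
        q j * (z j - μ) ^ 2 + (2 * (μ - c)) * (q j * z j)
          + ((μ - c) ^ 2 - 2 * (μ - c) * μ) * q j := fun j => by ring
    simp_rw [h, Finset.sum_add_distrib, ← Finset.mul_sum, hqs, ← hμ]
    ring
  rw [key]
  nlinarith [sq_nonneg (μ - c)]

lemma varD_le {n : ℕ} (ζ : ℝ) (p p' z : Fin n → ℝ)
    (hp : ∀ j, 0 ≤ p j) (hps : ∑ j, p j = 1) (hp's : ∑ j, p' j = 1)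
    (hle : ∀ j, p' j ≤ (1 + ζ) * p j) :
    varD p' z ≤ (1 + ζ) * varD p z := by
  calc varD p' z ≤ ∑ j, p' j * (z j - ∑ k, p k * z k) ^ 2 := varD_min p' z hp's _
    _ ≤ ∑ j, ((1 + ζ) * p j) * (z j - ∑ k, p k * z k) ^ 2 := by
        apply Finset.sum_le_sum
        intro j _
        exact mul_le_mul_of_nonneg_right (hle j) (sq_nonneg _)
    _ = (1 + ζ) * varD p z := by
        unfold varD; rw [Finset.mul_sum]; exact Finset.sum_congr rfl fun j _ => by ring

/-- If `q, q' ∈ Δⁿ` have strictly positive entries and are ζ-multiplicatively close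
(entrywise `q j / q' j ≤ 1 + ζ` and `q' j / q j ≤ 1 + ζ`), then for any `z`:
`(1 - ζ) Var_q(z) ≤ Var_{q'}(z) ≤ (1 + ζ) Var_q(z)`. -/
theorem var_mult_close (n : ℕ) (ζ : ℝ) (q q' z : Fin n → ℝ)
    (hq : ∀ j, 0 < q j) (hq' : ∀ j, 0 < q' j)
    (hqs : ∑ j, q j = 1) (hq's : ∑ j, q' j = 1)
    (hclose : ∀ j, q j / q' j ≤ 1 + ζ ∧ q' j / q j ≤ 1 + ζ) :
    (1 - ζ) * varD q z ≤ varD q' z ∧ varD q' z ≤ (1 + ζ) * varD q z := by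
  have hn : n ≠ 0 := by
    rintro rfl
    simp at hqs
  have j0 : Fin n := ⟨0, Nat.pos_of_ne_zero hn⟩
  have hζ : 0 < 1 + ζ := lt_of_lt_of_le (div_pos (hq j0) (hq' j0)) (hclose j0).1
  have hle1 : ∀ j, q' j ≤ (1 + ζ) * q j := fun j =>
    (div_le_iff₀ (hq j)).mp (hclose j).2
  have hle2 : ∀ j, q j ≤ (1 + ζ) * q' j := fun j =>
    (div_le_iff₀ (hq' j)).mp (hclose j).1
  have hupper : varD q' z ≤ (1 + ζ) * varD q z :=
    varD_le ζ q q' z (fun j => (hq j).le) hqs hq's hle1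
  have hrev : varD q z ≤ (1 + ζ) * varD q' z :=
    varD_le ζ q' q z (fun j => (hq' j).le) hq's hqs hle2
  have hv' : 0 ≤ varD q' z := varD_nonneg q' z fun j => (hq' j).le
  refine ⟨?_, hupper⟩
  nlinarith [mul_nonneg (sq_nonneg ζ) hv']
end

section
/- Let n ∈ N, ξ_1,...,ξ_n ≥ 0 with Σ_k ξ_k = 1, and define φ_j(z) = exp(z_j) / (Σ_k ξ_k exp(z_k)). Then for any z ∈ R^n with ‖z‖_∞ ≤ 1/4, it holds that |log φ_j(z)| ≤ 6 ‖z‖_∞. -/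
/-- For nonnegative weights `ξ` summing to `1` and
`φ_j(z) = exp(z_j) / ∑_k ξ_k exp(z_k)`, if `‖z‖_∞ ≤ 1/4` then
`|log φ_j(z)| ≤ 6 ‖z‖_∞` (the Pi norm on `Fin n → ℝ` is the sup norm). -/
theorem abs_log_softmax_le (n : ℕ) (ξ : Fin n → ℝ)
    (hξ : ∀ k, 0 ≤ ξ k) (hξs : ∑ k, ξ k = 1)
    (j : Fin n) (z : Fin n → ℝ) (hz : ‖z‖ ≤ 1 / 4) :
    |Real.log (Real.exp (z j) / ∑ k, ξ k * Real.exp (z k))| ≤ 6 * ‖z‖ := by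
  set M := ‖z‖ with hM
  have hM0 : 0 ≤ M := norm_nonneg z
  have hk : ∀ k, |z k| ≤ M := fun k => by
    simpa [Real.norm_eq_abs] using norm_le_pi_norm z k
  set S := ∑ k, ξ k * Real.exp (z k) with hS
  have hlow : Real.exp (-M) ≤ S := by
    calc Real.exp (-M) = ∑ k, ξ k * Real.exp (-M) := by
          rw [← Finset.sum_mul, hξs, one_mul]
      _ ≤ S := Finset.sum_le_sum fun k _ =>
          mul_le_mul_of_nonneg_left
            (Real.exp_le_exp.2 (neg_le_of_abs_le (hk k))) (hξ k)
  have hhigh : S ≤ Real.exp M := by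
    calc S ≤ ∑ k, ξ k * Real.exp M := Finset.sum_le_sum fun k _ =>
          mul_le_mul_of_nonneg_left
            (Real.exp_le_exp.2 (le_of_abs_le (hk k))) (hξ k)
      _ = Real.exp M := by rw [← Finset.sum_mul, hξs, one_mul]
  have hSpos : 0 < S := lt_of_lt_of_le (Real.exp_pos _) hlow
  have hlogS : |Real.log S| ≤ M := by
    rw [abs_le]
    constructor
    · have := Real.log_le_log (Real.exp_pos _) hlow
      simpa using this
    · have := Real.log_le_log hSpos hhigh
      simpa using this
  rw [Real.log_div (Real.exp_ne_zero _) (ne_of_gt hSpos), Real.log_exp]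
  calc |z j - Real.log S| ≤ |z j| + |Real.log S| := abs_sub _ _
    _ ≤ M + M := add_le_add (hk j) hlogS
    _ ≤ 6 * M := by linarith
end

section
/- Every column-stochastic matrix M ∈ R^{n×n} with strictly positive entries has a fixed point in the simplex: there exists x ∈ Δ^n with M x = x, and this x is unique. -/
open Matrix

open scoped ENNReal in
private lemma l1norm_eq (n : ℕ) (x : PiLp 1 (fun _ : Fin n => ℝ)) : ‖x‖ = ∑ i, |x i| := by
  rw [PiLp.norm_eq_sum (by norm_num : 0 < (1:ℝ≥0∞).toReal)]
  simp [Real.norm_eq_abs]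

private lemma key_contract (n : ℕ) (M : Matrix (Fin n) (Fin n) ℝ) (δ : ℝ)
    (hδle : ∀ a b, δ ≤ M a b) (hcol : ∀ b, ∑ a, M a b = 1)
    (z : Fin n → ℝ) (hz : ∑ j, z j = 0) :
    ∑ i, |M.mulVec z i| ≤ (1 - n * δ) * ∑ j, |z j| := by
  have h1 : ∀ i, |M.mulVec z i| ≤ ∑ j, (M i j - δ) * |z j| := by
    intro i
    have hrw : M.mulVec z i = ∑ j, (M i j - δ) * z j := by
      simp [Matrix.mulVec, dotProduct, sub_mul, Finset.sum_sub_distrib, ← Finset.mul_sum, hz]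
    rw [hrw]
    calc |∑ j, (M i j - δ) * z j| ≤ ∑ j, |(M i j - δ) * z j| :=
          Finset.abs_sum_le_sum_abs _ _
      _ = ∑ j, (M i j - δ) * |z j| := by
          refine Finset.sum_congr rfl fun j _ => ?_
          rw [abs_mul, abs_of_nonneg (by linarith [hδle i j])]
  calc ∑ i, |M.mulVec z i| ≤ ∑ i, ∑ j, (M i j - δ) * |z j| :=
        Finset.sum_le_sum fun i _ => h1 i
    _ = ∑ j, (∑ i, (M i j - δ)) * |z j| := by
        rw [Finset.sum_comm]
        exact Finset.sum_congr rfl fun j _ => (Finset.sum_mul _ _ _).symm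
    _ = (1 - n * δ) * ∑ j, |z j| := by
        have hc : ∀ j, ∑ i, (M i j - δ) = 1 - n * δ := by
          intro j
          rw [Finset.sum_sub_distrib, hcol j]
          simp [mul_comm]
        simp only [hc]
        rw [Finset.mul_sum]

/-- Every column-stochastic matrix `M` with strictly positive entries has a unique
fixed point in the probability simplex: there is a unique `x ∈ Δⁿ` with `M x = x`. -/
theorem exists_unique_stationary (n : ℕ) (hn : 1 ≤ n)
    (M : Matrix (Fin n) (Fin n) ℝ)
    (hpos : ∀ a b, 0 < M a b) (hcol : ∀ b, ∑ a, M a b = 1) :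
    ∃! x : Fin n → ℝ, (∀ i, 0 ≤ x i) ∧ (∑ i, x i = 1) ∧ M.mulVec x = x := by
  have hn0 : (0:ℝ) < n := by exact_mod_cast hn
  obtain ⟨p, -, hp⟩ := Finset.exists_min_image (Finset.univ : Finset (Fin n × Fin n))
      (fun q => M q.1 q.2) ⟨(⟨0, hn⟩, ⟨0, hn⟩), Finset.mem_univ _⟩
  set δ := M p.1 p.2 with hδdef
  have hδpos : 0 < δ := hpos _ _
  have hδle : ∀ a b, δ ≤ M a b := fun a b => hp (a, b) (Finset.mem_univ _)
  have hnδ : (n:ℝ) * δ ≤ 1 := by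
    calc (n:ℝ) * δ = ∑ _a : Fin n, δ := by simp [mul_comm]
      _ ≤ ∑ a, M a p.2 := Finset.sum_le_sum fun a _ => hδle a p.2
      _ = 1 := hcol p.2
  have hnδpos : 0 < (n:ℝ) * δ := by positivity
  -- sum preservation
  have hsum_mul : ∀ x : Fin n → ℝ, ∑ i, M.mulVec x i = ∑ j, x j := by
    intro x
    calc ∑ i, M.mulVec x i = ∑ i, ∑ j, M i j * x j := rfl
      _ = ∑ j, (∑ i, M i j) * x j := by rw [Finset.sum_comm]; simp [Finset.sum_mul]
      _ = ∑ j, x j := by simp [hcol]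
  -- nonneg preservation
  have hnn_mul : ∀ x : Fin n → ℝ, (∀ i, 0 ≤ x i) → ∀ i, 0 ≤ M.mulVec x i := by
    intro x hx i
    have hri : M.mulVec x i = ∑ j, M i j * x j := rfl
    rw [hri]
    exact Finset.sum_nonneg fun j _ => mul_nonneg (hpos i j).le (hx j)
  -- the ℓ¹ space and the hyperplane
  set E := PiLp 1 (fun _ : Fin n => ℝ) with hE
  set H : Set E := {x : E | ∑ i, x i = 1} with hHdef
  have hcontsum : Continuous fun x : E => ∑ i, x i :=
    continuous_finset_sum _ fun i _ =>
      (continuous_apply i).comp (PiLp.continuous_ofLp (p := 1) (β := fun _ : Fin n => ℝ))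
  have hHclosed : IsClosed H := isClosed_eq hcontsum continuous_const
  haveI : CompleteSpace H := hHclosed.completeSpace_coe
  have hx0mem : (WithLp.toLp 1 (fun _ => 1 / (n:ℝ)) : E) ∈ H := by
    show ∑ _i : Fin n, (1 / (n:ℝ)) = 1
    rw [Finset.sum_const, Finset.card_univ, Fintype.card_fin, nsmul_eq_mul]
    field_simp
  haveI : Nonempty H := ⟨⟨_, hx0mem⟩⟩
  -- the map
  set f : H → H := fun x => ⟨(WithLp.toLp 1 (M.mulVec (WithLp.ofLp (x:E))) : E), by
    show ∑ i, M.mulVec (WithLp.ofLp (x:E)) i = 1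
    rw [hsum_mul]; exact x.2⟩ with hf_def
  set K : NNReal := ⟨1 - n * δ, by linarith⟩ with hK
  have hKlt : K < 1 := by
    rw [← NNReal.coe_lt_coe]
    show (1 - n*δ : ℝ) < 1
    linarith
  have hdist : ∀ x y : H, dist (f x) (f y) ≤ (K:ℝ) * dist x y := by
    intro x y
    rw [Subtype.dist_eq, Subtype.dist_eq, dist_eq_norm, dist_eq_norm]
    have hzsum : ∑ j, ((x:E) - (y:E)) j = 0 := by
      have hr : ∑ j, ((x:E) - (y:E)) j = ∑ j, ((x:E) j - (y:E) j) := rfl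
      rw [hr, Finset.sum_sub_distrib, x.2, y.2]
      ring
    have hsub : ((f x : E)) - ((f y : E)) = (WithLp.toLp 1 (M.mulVec (WithLp.ofLp ((x:E) - (y:E)))) : E) := by
      show WithLp.toLp 1 (M.mulVec (WithLp.ofLp (x:E))) - WithLp.toLp 1 (M.mulVec (WithLp.ofLp (y:E))) = WithLp.toLp 1 (M.mulVec (WithLp.ofLp ((x:E) - (y:E))))
      rw [WithLp.ofLp_sub, Matrix.mulVec_sub, WithLp.toLp_sub]
    rw [hsub, l1norm_eq, l1norm_eq]
    exact key_contract n M δ hδle hcol _ hzsum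
  have hcontr : ContractingWith K f :=
    ⟨hKlt, LipschitzWith.of_dist_le_mul hdist⟩
  set xstar := ContractingWith.fixedPoint f hcontr with hxs
  -- nonnegativity via iterates
  set C : Set E := {x : E | ∀ i, 0 ≤ x i} with hCdef
  have hCclosed : IsClosed C := by
    have : C = ⋂ i, {x : E | 0 ≤ x i} := by ext; simp [hCdef]
    rw [this]
    exact isClosed_iInter fun i =>
      isClosed_le continuous_const ((continuous_apply i).comp (PiLp.continuous_ofLp (p := 1) (β := fun _ : Fin n => ℝ)))
  set x0 : H := ⟨_, hx0mem⟩ with hx0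
  have hiter : ∀ k, ((f^[k] x0 : H) : E) ∈ C := by
    intro k
    induction k with
    | zero =>
        intro i
        show (0:ℝ) ≤ 1 / n
        positivity
    | succ k ih =>
        rw [Function.iterate_succ_apply']
        exact hnn_mul _ ih
  have htend := hcontr.tendsto_iterate_fixedPoint x0
  have htend' : Filter.Tendsto (fun k => ((f^[k] x0 : H) : E)) Filter.atTop
      (nhds (xstar : E)) := (continuous_subtype_val.tendsto _).comp htend
  have hxnn : (xstar : E) ∈ C :=
    hCclosed.mem_of_tendsto htend' (Filter.Eventually.of_forall hiter)
  have hfixed : WithLp.toLp 1 (M.mulVec (WithLp.ofLp (xstar : E))) = (xstar : E) := by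
    have := hcontr.fixedPoint_isFixedPt
    exact congrArg Subtype.val this
  let xs : Fin n → ℝ := WithLp.ofLp (xstar : E)
  have hxsum : ∑ i, xs i = 1 := xstar.2
  have hxsnn : ∀ i, 0 ≤ xs i := hxnn
  have hxsfix : M.mulVec xs = xs := congrArg WithLp.ofLp hfixed
  refine ⟨xs, ⟨hxsnn, hxsum, hxsfix⟩, ?_⟩
  rintro y ⟨hynn, hysum, hyfix⟩
  -- uniqueness
  set z : Fin n → ℝ := y - xs with hz
  have hzsum : ∑ j, z j = 0 := by
    simp only [hz, Pi.sub_apply, Finset.sum_sub_distrib, hysum, hxsum]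
    ring
  have hzfix : M.mulVec z = z := by
    rw [hz, Matrix.mulVec_sub, hyfix, hxsfix]
  have hkey := key_contract n M δ hδle hcol z hzsum
  rw [hzfix] at hkey
  have hS0 : 0 ≤ ∑ j, |z j| := Finset.sum_nonneg fun j _ => abs_nonneg _
  have hSz : ∑ j, |z j| = 0 := by nlinarith
  have hzero : ∀ j ∈ Finset.univ, |z j| = 0 :=
    (Finset.sum_eq_zero_iff_of_nonneg fun j _ => abs_nonneg _).mp hSz
  funext i
  have hzi : z i = 0 := abs_eq_zero.mp (hzero i (Finset.mem_univ i))
  have hyi : y i - xs i = 0 := hzi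
  linarith
end
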